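/- For the integral curve α(s) = (sinh(t+s/|z_n|)z_n, z₁,…,z_{n-1}, cosh(t+s/|z_n|)z_n) (with ⟨α',α'⟩ = -1), the vector F(s) := α''(s) - α(s) satisfies ⟨F(s),F(s)⟩ = 1/|z_n|² - 1; in particular F is spacelike when |z_n| < 1, lightlike or zero when |z_n| = 1 (zero exactly when z = (0,…,0,e^{ir})), and timelike when |z_n| > 1. -/

import Mathlib

open ComplexConjugate

/-- Real part of the indefinite Hermitian form on ℂ^{n+1}_p, modelled as
ℂ × (Fin (n-1) → ℂ) × ℂ: first coordinate timelike, middle block with p-1 further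
minus signs, last coordinate spacelike. -/
noncomputable def Gbig' (p : ℕ) {m : ℕ} (v w : ℂ × (Fin m → ℂ) × ℂ) : ℝ :=
  -(v.1 * conj w.1).re
    + (∑ j : Fin m, (if (j : ℕ) < p - 1 then (-1 : ℝ) else 1) * (v.2.1 j * conj (w.2.1 j)).re)
    + (v.2.2 * conj w.2.2).re

/-- The form of ℂⁿ_{p-1} on (Fin (n-1) → ℂ) × ℂ (with p-1 minus signs). -/
noncomputable def Gsm' (p : ℕ) {m : ℕ} (v w : (Fin m → ℂ) × ℂ) : ℝ :=
  (∑ j : Fin m, (if (j : ℕ) < p - 1 then (-1 : ℝ) else 1) * (v.1 j * conj (w.1 j)).re)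
    + (v.2 * conj w.2).re

lemma re_mul_conj_smul' (r : ℝ) (z : ℂ) :
    ((r : ℂ) * z * conj ((r : ℂ) * z)).re = r ^ 2 * ‖z‖ ^ 2 := by
  rw [map_mul, Complex.conj_ofReal]
  have h : (r : ℂ) * z * ((r : ℂ) * conj z) = ((r * r : ℝ) : ℂ) * (z * conj z) := by
    push_cast; ring
  rw [h, Complex.mul_conj, ← Complex.ofReal_mul, Complex.ofReal_re,
    Complex.normSq_eq_norm_sq]
  ring

theorem stmt19 (n p : ℕ) (hn : 3 ≤ n) (hp1 : 2 ≤ p) (hpn : p ≤ n - 1)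
    (w : Fin (n - 1) → ℂ) (zn : ℂ) (hzn : zn ≠ 0)
    (hz : Gsm' p (w, zn) (w, zn) = 1) (t : ℝ)
    (α : ℝ → ℂ × (Fin (n - 1) → ℂ) × ℂ)
    (hα : α = fun s => (((Real.sinh (t + s / ‖zn‖) : ℝ) : ℂ) * zn, w,
      ((Real.cosh (t + s / ‖zn‖) : ℝ) : ℂ) * zn))
    (F : ℝ → ℂ × (Fin (n - 1) → ℂ) × ℂ)
    (hF : F = fun s => deriv (deriv α) s - α s) :
    ∀ s, Gbig' p (deriv α s) (deriv α s) = -1 ∧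
      Gbig' p (F s) (F s) = 1 / (‖zn‖) ^ 2 - 1 ∧
      (‖zn‖ < 1 → 0 < Gbig' p (F s) (F s)) ∧
      (‖zn‖ = 1 → (F s = 0 ↔ w = 0)) ∧
      (1 < ‖zn‖ → Gbig' p (F s) (F s) < 0) := by
  have hapos : (0 : ℝ) < ‖zn‖ := norm_pos_iff.mpr hzn
  set a : ℝ := ‖zn‖ with ha
  have ha0 : a ≠ 0 := ne_of_gt hapos
  -- derivative of the reparametrization
  have hg : ∀ u : ℝ, HasDerivAt (fun s : ℝ => t + s / a) (1 / a) u := by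
    intro u
    simpa using ((hasDerivAt_id u).div_const a).const_add t
  -- derivative of scalar-coefficient components
  have hsc : ∀ (u : ℝ) (f f' : ℝ → ℝ), (∀ x, HasDerivAt f (f' x) x) →
      HasDerivAt (fun s : ℝ => ((f (t + s / a) : ℝ) : ℂ) * zn)
        (((f' (t + u / a) / a : ℝ) : ℂ) * zn) u := by
    intro u f f' hf
    have h1 : HasDerivAt (fun s : ℝ => f (t + s / a)) (f' (t + u / a) * (1 / a)) u :=
      (hf _).comp u (hg u)
    have h2 := (h1.ofReal_comp).mul_const zn
    exact h2.congr_deriv (by push_cast; ring)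
  -- first derivative of α
  have hda : deriv α = fun s => (((Real.cosh (t + s / a) / a : ℝ) : ℂ) * zn,
      (0 : Fin (n - 1) → ℂ), ((Real.sinh (t + s / a) / a : ℝ) : ℂ) * zn) := by
    funext u
    have h1 := hsc u Real.sinh Real.cosh Real.hasDerivAt_sinh
    have h3 := hsc u Real.cosh Real.sinh Real.hasDerivAt_cosh
    have hA : HasDerivAt α (((Real.cosh (t + u / a) / a : ℝ) : ℂ) * zn,
        (0 : Fin (n - 1) → ℂ), ((Real.sinh (t + u / a) / a : ℝ) : ℂ) * zn) u := by
      rw [hα]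
      exact h1.prodMk ((hasDerivAt_const u w).prodMk h3)
    exact hA.deriv
  -- second derivative of α
  have hdda : deriv (deriv α) = fun s => (((Real.sinh (t + s / a) / a / a : ℝ) : ℂ) * zn,
      (0 : Fin (n - 1) → ℂ), ((Real.cosh (t + s / a) / a / a : ℝ) : ℂ) * zn) := by
    funext u
    have h1 := hsc u (fun x => Real.cosh x / a) (fun x => Real.sinh x / a)
      (fun x => (Real.hasDerivAt_cosh x).div_const a)
    have h3 := hsc u (fun x => Real.sinh x / a) (fun x => Real.cosh x / a)
      (fun x => (Real.hasDerivAt_sinh x).div_const a)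
    have hA : HasDerivAt (deriv α) (((Real.sinh (t + u / a) / a / a : ℝ) : ℂ) * zn,
        (0 : Fin (n - 1) → ℂ), ((Real.cosh (t + u / a) / a / a : ℝ) : ℂ) * zn) u := by
      rw [hda]
      exact h1.prodMk ((hasDerivAt_const u (0 : Fin (n - 1) → ℂ)).prodMk h3)
    exact hA.deriv
  intro s
  set c : ℝ := Real.cosh (t + s / a) with hc
  set sh : ℝ := Real.sinh (t + s / a) with hsh
  have hcs : c ^ 2 - sh ^ 2 = 1 := Real.cosh_sq_sub_sinh_sq _
  -- value of F
  have hFs : F s = (((sh / a / a - sh : ℝ) : ℂ) * zn, -w, ((c / a / a - c : ℝ) : ℂ) * zn) := by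
    rw [hF]
    simp only [hdda]
    simp only [hα, Prod.mk_sub_mk, Prod.mk.injEq]
    refine ⟨?_, ?_, ?_⟩
    · rw [← sub_mul, ← Complex.ofReal_sub]
    · simp
    · rw [← sub_mul, ← Complex.ofReal_sub]
  -- sum from hz
  have hS : (∑ j : Fin (n - 1), (if (j : ℕ) < p - 1 then (-1 : ℝ) else 1)
      * (w j * conj (w j)).re) = 1 - a ^ 2 := by
    have hzn2 : (zn * conj zn).re = a ^ 2 := by
      rw [Complex.mul_conj, Complex.ofReal_re, Complex.normSq_eq_norm_sq]
    unfold Gsm' at hz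
    simp only at hz
    linarith [hz, hzn2]
  -- first claim
  have hG1 : Gbig' p (deriv α s) (deriv α s) = -1 := by
    rw [hda]
    unfold Gbig'
    simp only [re_mul_conj_smul']
    have h0 : (∑ j : Fin (n - 1), (if (j : ℕ) < p - 1 then (-1 : ℝ) else 1)
        * (((0 : Fin (n - 1) → ℂ) j) * conj ((0 : Fin (n - 1) → ℂ) j)).re) = 0 := by
      simp
    rw [h0]
    have e1 : (c / a) ^ 2 * a ^ 2 = c ^ 2 := by field_simp
    have e2 : (sh / a) ^ 2 * a ^ 2 = sh ^ 2 := by field_simp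
    rw [e1, e2]; linarith
  have hG2 : Gbig' p (F s) (F s) = 1 / a ^ 2 - 1 := by
    rw [hFs]
    unfold Gbig'
    simp only [re_mul_conj_smul']
    have h0 : (∑ j : Fin (n - 1), (if (j : ℕ) < p - 1 then (-1 : ℝ) else 1)
        * (((-w) j) * conj ((-w) j)).re) = 1 - a ^ 2 := by
      simp only [Pi.neg_apply, map_neg, neg_mul_neg]
      exact hS
    rw [h0]
    have key : (c / a / a - c) ^ 2 - (sh / a / a - sh) ^ 2
        = (1 / a ^ 2 - 1) ^ 2 * (c ^ 2 - sh ^ 2) := by field_simp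
    rw [hcs, mul_one] at key
    have : -((sh / a / a - sh) ^ 2 * a ^ 2) + (1 - a ^ 2) + (c / a / a - c) ^ 2 * a ^ 2
        = (1 / a ^ 2 - 1) ^ 2 * a ^ 2 + (1 - a ^ 2) := by rw [← key]; ring
    rw [this]
    field_simp
    ring
  refine ⟨hG1, hG2, ?_, ?_, ?_⟩
  · intro h1
    rw [hG2]
    have h2 : a ^ 2 < 1 := by nlinarith
    have : 1 < 1 / a ^ 2 := (one_lt_one_div (by positivity) h2)
    linarith
  · intro h1
    rw [hFs, h1]
    simp [Prod.ext_iff, neg_eq_zero]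
  · intro h1
    rw [hG2]
    have h2 : 1 < a ^ 2 := by nlinarith
    have : 1 / a ^ 2 < 1 := by
      rw [div_lt_one (by positivity)]; linarith
    linarith
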